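/- arXiv:math/0110006 — 3 statements merged into one kernel-verified Lean document; each statement's English description precedes it below -/
import Mathlib

section
/- Let p be an odd prime and c a positive integer whose digit c_0 = c \bmod p is nonzero and which has some nonzero digit c_j with j \ge 1; set k = \min\{j \ge 1 : c_j \ne 0\} and c' = c - 2c_0 (which is positive). Then: (1) every finite c'-admissible set I with 0 \in I contains the interval \{0, 1, \dots, k-1\}; and (2) the map I \mapsto I \setminus \{0, \dots, k-1\} is a bijection from the collection of finite c'-admissible sets I with 0 \in I onto the collection of finite c-admissible sets J with 0 \notin J, with inverse J \mapsto J \cup \{0, \dots, k-1\}. -/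
/-- `digit p c i` is the `i`-th base-`p` digit of `c`. -/
def digit (p c i : ℕ) : ℕ := c / p ^ i % p

/-- A finite set `I ⊆ ℕ` is `c`-admissible (for the base-`p` digits of `c`) if
(a) for every `i ∈ I` with `i = 0` or `i-1 ∉ I` one has `c_i ≠ 0`, and
(b) for every `i ∉ I` with `i ≥ 1` and `i-1 ∈ I` one has `c_i ≠ p-1`. -/
def IsAdmissible (p c : ℕ) (I : Finset ℕ) : Prop :=
  (∀ i ∈ I, (i = 0 ∨ i - 1 ∉ I) → digit p c i ≠ 0) ∧
  (∀ i : ℕ, i ∉ I → 1 ≤ i → i - 1 ∈ I → digit p c i ≠ p - 1)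

/-- `δ_c(I) = ∑_{i ∈ I} (p-1-c_i) p^i + ∑_{i ∈ I, i=0 ∨ i-1 ∉ I} p^i`. -/
def deltaC (p c : ℕ) (I : Finset ℕ) : ℕ :=
  (∑ i ∈ I, (p - 1 - digit p c i) * p ^ i) +
    ∑ i ∈ I.filter (fun i => i = 0 ∨ i - 1 ∉ I), p ^ i

lemma digit_split (p : ℕ) (hp : 1 < p) (a b k i : ℕ) (ha : a < p ^ k) :
    digit p (p ^ k * b + a) i = if i < k then digit p a i else digit p b (i - k) := by
  unfold digit
  split
  · rename_i hik
    have h1 : p ^ k = p ^ i * p ^ (k - i) := by rw [← pow_add]; congr 1; omega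
    have h2 : (p ^ k * b + a) / p ^ i = a / p ^ i + p ^ (k - i) * b := by
      rw [h1, mul_assoc, add_comm]
      exact Nat.add_mul_div_left a (p ^ (k - i) * b) (by positivity)
    rw [h2]
    have h3 : p ^ (k - i) * b = p * (p ^ (k - i - 1) * b) := by
      rw [← mul_assoc, ← pow_succ']
      congr 2; omega
    rw [h3, mul_comm p, Nat.add_mul_mod_self_right]
  · rename_i hik
    have h1 : p ^ i = p ^ k * p ^ (i - k) := by rw [← pow_add]; congr 1; omega
    have h2 : (p ^ k * b + a) / p ^ i = b / p ^ (i - k) := by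
      rw [h1, ← Nat.div_div_eq_div_mul, Nat.mul_add_div (by positivity),
        Nat.div_eq_of_lt ha, add_zero]
    rw [h2]

lemma digit_pow_sub_one (p : ℕ) (hp : 1 < p) : ∀ m j : ℕ, j < m → digit p (p ^ m - 1) j = p - 1 := by
  intro m
  induction m with
  | zero => omega
  | succ n ih =>
    intro j hj
    have h1 : p ^ (n + 1) - 1 = p ^ 1 * (p ^ n - 1) + (p - 1) := by
      have h2 : 1 ≤ p ^ n := Nat.one_le_pow _ _ (by omega)
      have : p ^ (n+1) = p * p ^ n := by ring
      have h3 : p ≤ p * p ^ n := Nat.le_mul_of_pos_right p (by positivity)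
      rw [pow_one, Nat.mul_sub, mul_one, this]; omega
    rw [h1, digit_split p hp _ _ 1 j (by rw [pow_one]; omega)]
    split
    · rename_i h; interval_cases j
      simp [digit, Nat.mod_eq_of_lt (show p - 1 < p by omega)]
    · exact ih (j - 1) (by omega)

lemma digit_pow_sub (p : ℕ) (hp : 1 < p) (c₀ : ℕ) (h1 : 1 ≤ c₀) (h2 : c₀ < p)
    (k : ℕ) (hk : 1 ≤ k) :
    digit p (p ^ k - c₀) 0 = p - c₀ ∧
    ∀ i, 1 ≤ i → i < k → digit p (p ^ k - c₀) i = p - 1 := by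
  have hE : p ^ k - c₀ = p ^ 1 * (p ^ (k - 1) - 1) + (p - c₀) := by
    have h3 : 1 ≤ p ^ (k - 1) := Nat.one_le_pow _ _ (by omega)
    have h4 : p ^ k = p * p ^ (k - 1) := by
      rw [← pow_succ']; congr 1; omega
    rw [pow_one, Nat.mul_sub, ← h4]
    have h5 : p ≤ p ^ k := by calc p = p ^ 1 := (pow_one p).symm
                                 _ ≤ p ^ k := Nat.pow_le_pow_right (by omega) hk
    omega
  constructor
  · rw [hE, digit_split p hp _ _ 1 0 (by rw [pow_one]; omega)]
    simp only [zero_lt_one, if_true]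
    simp [digit, Nat.mod_eq_of_lt (show p - c₀ < p by omega)]
  · intro i hi1 hik
    rw [hE, digit_split p hp _ _ 1 i (by rw [pow_one]; omega)]
    rw [if_neg (by omega)]
    exact digit_pow_sub_one p hp _ _ (by omega)

/-- Let `p` be an odd prime and `c` a positive integer with `c₀ = c mod p ≠ 0` having a
nonzero digit `c_j`, `j ≥ 1`; let `k` be minimal such `j` and `c' = c - 2c₀` (which is
positive). Then (1) every finite `c'`-admissible set containing `0` contains
`{0,…,k-1}`; (2) `I ↦ I \ {0,…,k-1}` is a bijection from the finite `c'`-admissible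
sets containing `0` onto the finite `c`-admissible sets not containing `0`, with
inverse `J ↦ J ∪ {0,…,k-1}`. -/
theorem admissible_bijection (p : ℕ) (hp : p.Prime) (hodd : Odd p)
    (c : ℕ) (hc : 0 < c) (hc0 : digit p c 0 ≠ 0)
    (k : ℕ) (hk1 : 1 ≤ k) (hk2 : digit p c k ≠ 0)
    (hkmin : ∀ j, 1 ≤ j → j < k → digit p c j = 0) :
    0 < c - 2 * digit p c 0 ∧
    (∀ I : Finset ℕ, IsAdmissible p (c - 2 * digit p c 0) I → 0 ∈ I →
      Finset.range k ⊆ I) ∧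
    Set.BijOn (fun I : Finset ℕ => I \ Finset.range k)
      {I : Finset ℕ | IsAdmissible p (c - 2 * digit p c 0) I ∧ 0 ∈ I}
      {J : Finset ℕ | IsAdmissible p c J ∧ 0 ∉ J} ∧
    Set.InvOn (fun J : Finset ℕ => J ∪ Finset.range k)
      (fun I : Finset ℕ => I \ Finset.range k)
      {I : Finset ℕ | IsAdmissible p (c - 2 * digit p c 0) I ∧ 0 ∈ I}
      {J : Finset ℕ | IsAdmissible p c J ∧ 0 ∉ J} := by
  have hp1 : 1 < p := hp.one_lt
  obtain ⟨c₀, hc₀def⟩ : ∃ x, digit p c 0 = x := ⟨_, rfl⟩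
  rw [hc₀def] at hc0 ⊢
  have hc₀p : c₀ < p := hc₀def ▸ Nat.mod_lt _ (by omega)
  have hc₀1 : 1 ≤ c₀ := Nat.one_le_iff_ne_zero.2 hc0
  obtain ⟨q, hqdef⟩ : ∃ x, c / p ^ k = x := ⟨_, rfl⟩
  have hqk : digit p c k = q % p := by rw [← hqdef]; rfl
  have hq1 : q ≠ 0 := fun h => hk2 (by rw [hqk, h, Nat.zero_mod])
  have hqp1 : 1 ≤ q % p := by
    rw [hqk] at hk2; omega
  have hqpp : q % p < p := Nat.mod_lt _ (by omega)
  have hmod : ∀ j, 1 ≤ j → j ≤ k → c % p ^ j = c₀ := by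
    intro j
    induction j with
    | zero => omega
    | succ n ih =>
      intro _ hjk
      rcases Nat.eq_zero_or_pos n with hn | hn
      · subst hn
        rw [pow_one, ← hc₀def]
        simp [digit]
      · rw [Nat.mod_pow_succ, ih (by omega) (by omega),
          show c / p ^ n % p = digit p c n from rfl, hkmin n hn (by omega), Nat.mul_zero,
          Nat.add_zero]
  have hceq : c = p ^ k * q + c₀ := by
    have h := Nat.div_add_mod c (p ^ k)
    rw [hmod k hk1 le_rfl, hqdef] at h
    omega
  have hpkc0 : c₀ < p ^ k := lt_of_lt_of_le hc₀p (by
    calc p = p ^ 1 := (pow_one p).symm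
    _ ≤ p ^ k := Nat.pow_le_pow_right (by omega) hk1)
  have hmul : p ^ k * (q - 1) + p ^ k = p ^ k * q := by
    rw [← Nat.mul_succ]; congr 1; omega
  obtain ⟨c', hc'def⟩ : ∃ x, c - 2 * c₀ = x := ⟨_, rfl⟩
  rw [hc'def]
  have hc'eq : c' = p ^ k * (q - 1) + (p ^ k - c₀) := by omega
  have hc'pos : 0 < c' := by omega
  have hsub := digit_pow_sub p hp1 c₀ hc₀1 hc₀p k hk1
  have hd0 : digit p c' 0 = p - c₀ := by
    rw [hc'eq, digit_split p hp1 _ _ k 0 (by omega), if_pos (by omega)]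
    exact hsub.1
  have hdmid : ∀ i, 1 ≤ i → i < k → digit p c' i = p - 1 := by
    intro i h1 h2
    rw [hc'eq, digit_split p hp1 _ _ k i (by omega), if_pos h2]
    exact hsub.2 i h1 h2
  have hdhi : ∀ i, k ≤ i → digit p c' i = digit p (q - 1) (i - k) := by
    intro i h
    rw [hc'eq, digit_split p hp1 _ _ k i (by omega), if_neg (by omega)]
  have hchi : ∀ i, k ≤ i → digit p c i = digit p q (i - k) := by
    intro i h
    conv_lhs => rw [hceq]
    rw [digit_split p hp1 _ _ k i hpkc0, if_neg (by omega)]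
  have hqsplit : q - 1 = p ^ 1 * (q / p) + (q % p - 1) := by
    have h := Nat.div_add_mod q p
    rw [pow_one]; omega
  have hqsplit' : q = p ^ 1 * (q / p) + q % p := by
    have h := Nat.div_add_mod q p
    rw [pow_one]; omega
  clear hqdef hc'def hc₀def
  have hq0 : digit p (q - 1) 0 = q % p - 1 := by
    rw [hqsplit, digit_split p hp1 _ _ 1 0 (by rw [pow_one]; omega), if_pos (by omega)]
    simp [digit, Nat.mod_eq_of_lt (show q % p - 1 < p by omega)]
  have hqj : ∀ j, 1 ≤ j → digit p (q - 1) j = digit p q j := by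
    intro j hj
    rw [hqsplit, digit_split p hp1 _ _ 1 j (by rw [pow_one]; omega), if_neg (by omega)]
    conv_rhs => rw [hqsplit']
    rw [digit_split p hp1 _ _ 1 j (by rw [pow_one]; omega), if_neg (by omega)]
  have hdk : digit p c' k = digit p c k - 1 := by
    rw [hdhi k le_rfl, Nat.sub_self, hq0, hqk]
  have hdgt : ∀ i, k < i → digit p c' i = digit p c i := by
    intro i h
    rw [hdhi i (by omega), hchi i (by omega), hqj (i - k) (by omega)]
  -- part 1
  have claim1 : ∀ I : Finset ℕ, IsAdmissible p c' I → 0 ∈ I → Finset.range k ⊆ I := by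
    intro I hI h0
    have key : ∀ i, i < k → i ∈ I := by
      intro i
      induction i with
      | zero => intro _; exact h0
      | succ n ih =>
        intro h
        by_contra hn
        exact hI.2 (n + 1) hn (by omega) (by simpa using ih (by omega))
          (hdmid (n + 1) (by omega) h)
    intro i hi
    exact key i (Finset.mem_range.1 hi)
  have claim2 : ∀ J : Finset ℕ, IsAdmissible p c J → 0 ∉ J → ∀ i ∈ J, k ≤ i := by
    intro J hJ h0J
    have key : ∀ i, i < k → i ∉ J := by
      intro i
      induction i with
      | zero => intro _; exact h0J
      | succ n ih =>
        intro h hmem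
        by_cases hn : n ∈ J
        · exact ih (by omega) hn
        · exact hJ.1 (n + 1) hmem (Or.inr (by simpa using hn)) (hkmin (n + 1) (by omega) h)
    intro i hi
    by_contra hik
    exact key i (by omega) hi
  -- forward maps-to
  have hMT1 : ∀ I : Finset ℕ, IsAdmissible p c' I → 0 ∈ I →
      IsAdmissible p c (I \ Finset.range k) ∧ 0 ∉ I \ Finset.range k := by
    intro I hI h0
    refine ⟨⟨?_, ?_⟩, ?_⟩
    · intro i hi hcond
      rw [Finset.mem_sdiff, Finset.mem_range] at hi
      rcases Nat.lt_or_ge k i with hik | hik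
      · rw [← hdgt i hik]
        refine hI.1 i hi.1 (Or.inr ?_)
        rcases hcond with h | h
        · omega
        · rw [Finset.mem_sdiff, Finset.mem_range] at h
          intro hmem
          exact h ⟨hmem, by omega⟩
      · have : i = k := by omega
        subst this
        exact hk2
    · intro i hiJ h1 hi1J
      rw [Finset.mem_sdiff, Finset.mem_range] at hi1J
      have hik : k < i := by omega
      rw [← hdgt i hik]
      refine hI.2 i ?_ h1 hi1J.1
      intro hmem
      exact hiJ (Finset.mem_sdiff.2 ⟨hmem, by rw [Finset.mem_range]; omega⟩)
    · rw [Finset.mem_sdiff, Finset.mem_range]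
      intro h
      exact h.2 (by omega)
  -- backward maps-to
  have hMT2 : ∀ J : Finset ℕ, IsAdmissible p c J → 0 ∉ J →
      IsAdmissible p c' (J ∪ Finset.range k) ∧ 0 ∈ J ∪ Finset.range k := by
    intro J hJ h0J
    have hJk := claim2 J hJ h0J
    refine ⟨⟨?_, ?_⟩, Finset.mem_union_right _ (Finset.mem_range.2 (by omega))⟩
    · intro i hi hcond
      rcases Nat.eq_zero_or_pos i with h0 | h0
      · subst h0; rw [hd0]; omega
      rcases hcond with h | h
      · omega
      · -- i ≥ 1, i-1 ∉ J ∪ range k, so i - 1 ≥ k, i > k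
        have hi1r : ¬ (i - 1 < k) := fun hlt =>
          h (Finset.mem_union_right _ (Finset.mem_range.2 hlt))
        have hik : k < i := by omega
        rw [hdgt i hik]
        rw [Finset.mem_union, Finset.mem_range] at hi
        have hiJ : i ∈ J := by rcases hi with h' | h'; exact h'; omega
        refine hJ.1 i hiJ (Or.inr ?_)
        intro hmem
        exact h (Finset.mem_union_left _ hmem)
    · intro i hiU h1 hi1U
      have hir : ¬ i < k := fun hlt => hiU (Finset.mem_union_right _ (Finset.mem_range.2 hlt))
      rcases Nat.lt_or_ge k i with hik | hik
      · rw [hdgt i hik]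
        rw [Finset.mem_union, Finset.mem_range] at hi1U
        have hi1J : i - 1 ∈ J := by rcases hi1U with h' | h'; exact h'; omega
        refine hJ.2 i ?_ h1 hi1J
        intro hmem
        exact hiU (Finset.mem_union_left _ hmem)
      · have hik' : i = k := by omega
        rw [hik', hdk]
        have hdklt : digit p c k < p := Nat.mod_lt _ (by omega)
        omega
  have hleft : ∀ I : Finset ℕ, IsAdmissible p c' I ∧ 0 ∈ I →
      (I \ Finset.range k) ∪ Finset.range k = I := by
    intro I hI
    exact Finset.sdiff_union_of_subset (claim1 I hI.1 hI.2)
  have hright : ∀ J : Finset ℕ, IsAdmissible p c J ∧ 0 ∉ J →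
      (J ∪ Finset.range k) \ Finset.range k = J := by
    intro J hJ
    have hJk := claim2 J hJ.1 hJ.2
    ext a
    simp only [Finset.mem_sdiff, Finset.mem_union, Finset.mem_range]
    constructor
    · rintro ⟨h | h, h2⟩
      · exact h
      · omega
    · intro h
      exact ⟨Or.inl h, fun hlt => absurd (hJk a h) (by omega)⟩
  have hInv : Set.InvOn (fun J : Finset ℕ => J ∪ Finset.range k)
      (fun I : Finset ℕ => I \ Finset.range k)
      {I : Finset ℕ | IsAdmissible p c' I ∧ 0 ∈ I}
      {J : Finset ℕ | IsAdmissible p c J ∧ 0 ∉ J} :=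
    ⟨fun I hI => hleft I hI, fun J hJ => hright J hJ⟩
  have hm1 : Set.MapsTo (fun I : Finset ℕ => I \ Finset.range k)
      {I : Finset ℕ | IsAdmissible p c' I ∧ 0 ∈ I}
      {J : Finset ℕ | IsAdmissible p c J ∧ 0 ∉ J} :=
    fun I hI => hMT1 I hI.1 hI.2
  have hm2 : Set.MapsTo (fun J : Finset ℕ => J ∪ Finset.range k)
      {J : Finset ℕ | IsAdmissible p c J ∧ 0 ∉ J}
      {I : Finset ℕ | IsAdmissible p c' I ∧ 0 ∈ I} :=
    fun J hJ => hMT2 J hJ.1 hJ.2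
  exact ⟨hc'pos, claim1, hInv.bijOn hm1 hm2, hInv⟩
end

section
/- Let p be an odd prime and c a positive integer whose digit c_0 = c \bmod p is nonzero and which has some nonzero digit c_j with j \ge 1; set k = \min\{j \ge 1 : c_j \ne 0\} and c' = c - 2c_0. Then for every finite c'-admissible set I with 0 \in I one has \delta_{c'}(I) = \delta_c(I \setminus \{0, \dots, k-1\}) + c_0. -/
private lemma mul_pred_add (a b : ℕ) (hb : 1 ≤ b) : a * (b - 1) + a = a * b := by
  cases b with
  | zero => omega
  | succ n => simp [Nat.mul_succ]

private lemma digit_of_rep {p : ℕ} (hp : 0 < p) (i q r : ℕ) (hr : r < p ^ i) :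
    digit p (p ^ i * q + r) i = q % p := by
  show (p ^ i * q + r) / p ^ i % p = q % p
  rw [Nat.mul_add_div (pow_pos hp i), Nat.div_eq_of_lt hr, add_zero]

/-- Let `p` be an odd prime and `c` a positive integer with `c₀ = c mod p ≠ 0` having a
nonzero digit `c_j`, `j ≥ 1`; let `k` be minimal such `j` and `c' = c - 2c₀`. Then for
every finite `c'`-admissible set `I` with `0 ∈ I`,
`δ_{c'}(I) = δ_c(I \ {0,…,k-1}) + c₀`. -/
theorem delta_of_admissible_bijection (p : ℕ) (hp : p.Prime) (hodd : Odd p)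
    (c : ℕ) (hc : 0 < c) (hc0 : digit p c 0 ≠ 0)
    (k : ℕ) (hk1 : 1 ≤ k) (hk2 : digit p c k ≠ 0)
    (hkmin : ∀ j, 1 ≤ j → j < k → digit p c j = 0) :
    ∀ I : Finset ℕ, IsAdmissible p (c - 2 * digit p c 0) I → 0 ∈ I →
      deltaC p (c - 2 * digit p c 0) I = deltaC p c (I \ Finset.range k) + digit p c 0 := by
  intro I hI h0I
  have hp1 : 1 < p := hp.one_lt
  have hppos : 0 < p := by omega
  set c0 := digit p c 0 with hc0d
  set c' := c - 2 * c0 with hc'd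
  have hc0eq : c0 = c % p := by rw [hc0d]; simp [digit]
  have hc0p : c0 < p := by rw [hc0eq]; exact Nat.mod_lt _ hppos
  have hc0pos : 1 ≤ c0 := Nat.one_le_iff_ne_zero.2 hc0
  -- the lowest k digits of c are c0
  have hmodk : ∀ j, 1 ≤ j → j ≤ k → c % p ^ j = c0 := by
    intro j
    induction j with
    | zero => omega
    | succ n ih =>
      intro _ hle
      rcases Nat.eq_zero_or_pos n with hn | hn
      · subst hn; rw [pow_one, hc0eq]
      · have hd : c / p ^ n % p = 0 := hkmin n hn (by omega)
        rw [Nat.mod_pow_succ, hd, mul_zero, add_zero]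
        exact ih hn (by omega)
  set M := c / p ^ k with hMd
  have hMdig : digit p c k = M % p := rfl
  have hMpos : 1 ≤ M := by
    rcases Nat.eq_zero_or_pos M with h | h
    · exact absurd (by rw [hMdig, h]; rfl) hk2
    · exact h
  have hMmodpos : 1 ≤ M % p := by
    have := hk2; rw [hMdig] at this; omega
  have hMmodlt : M % p < p := Nat.mod_lt _ hppos
  have hppk : p ≤ p ^ k := by
    calc p = p ^ 1 := (pow_one p).symm
    _ ≤ p ^ k := Nat.pow_le_pow_right (le_of_lt hp1) hk1
  have hcM : c = p ^ k * M + c0 := by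
    conv_lhs => rw [← Nat.div_add_mod c (p ^ k)]
    rw [hmodk k hk1 le_rfl]
  have hXge : p ^ k ≤ p ^ k * M := Nat.le_mul_of_pos_right _ hMpos
  have hc'X : c' = p ^ k * M - c0 := by omega
  -- digit 0 of c'
  have hd0 : digit p c' 0 = p - c0 := by
    have hpk1 : p * p ^ (k - 1) = p ^ k := by
      conv_rhs => rw [show k = (k - 1) + 1 by omega]
      rw [pow_succ']
    have hY : p * (p ^ (k - 1) * M) = p ^ k * M := by rw [← mul_assoc, hpk1]
    have hYpos : 1 ≤ p ^ (k - 1) * M := Nat.mul_pos (pow_pos hppos _) hMpos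
    have h2 : p * (p ^ (k - 1) * M - 1) + p = p * (p ^ (k - 1) * M) :=
      mul_pred_add _ _ hYpos
    have hrep : c' = p * (p ^ (k - 1) * M - 1) + (p - c0) := by omega
    show c' / p ^ 0 % p = p - c0
    rw [pow_zero, Nat.div_one, hrep, Nat.mul_add_mod, Nat.mod_eq_of_lt (by omega)]
  -- digits 1..k-1 of c' are p-1
  have hdmid : ∀ i, 1 ≤ i → i < k → digit p c' i = p - 1 := by
    intro i h1i hik
    have hpi : p ≤ p ^ i := by
      calc p = p ^ 1 := (pow_one p).symm
      _ ≤ p ^ i := Nat.pow_le_pow_right (le_of_lt hp1) h1i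
    have hZ : p ^ i * (p ^ (k - i) * M) = p ^ k * M := by
      rw [← mul_assoc, ← pow_add, show i + (k - i) = k by omega]
    have hZpos : 1 ≤ p ^ (k - i) * M := Nat.mul_pos (pow_pos hppos _) hMpos
    have h2 : p ^ i * (p ^ (k - i) * M - 1) + p ^ i = p ^ i * (p ^ (k - i) * M) :=
      mul_pred_add _ _ hZpos
    have hpik : p ^ i ≤ p ^ k := Nat.pow_le_pow_right (le_of_lt hp1) (le_of_lt hik)
    have hrep : c' = p ^ i * (p ^ (k - i) * M - 1) + (p ^ i - c0) := by omega
    rw [hrep, digit_of_rep hppos i _ _ (by omega)]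
    -- (p^(k-i) * M - 1) % p = p - 1
    have hW : p * (p ^ (k - i - 1) * M) = p ^ (k - i) * M := by
      rw [← mul_assoc, ← pow_succ', show (k - i - 1) + 1 = k - i by omega]
    have hWpos : 1 ≤ p ^ (k - i - 1) * M := Nat.mul_pos (pow_pos hppos _) hMpos
    have h3 : p * (p ^ (k - i - 1) * M - 1) + p = p * (p ^ (k - i - 1) * M) :=
      mul_pred_add _ _ hWpos
    have h4 : p ≤ p * (p ^ (k - i - 1) * M) := Nat.le_mul_of_pos_right _ hWpos
    have h5 : p ^ (k - i) * M - 1 = p * (p ^ (k - i - 1) * M - 1) + (p - 1) := by omega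
    rw [h5, Nat.mul_add_mod, Nat.mod_eq_of_lt (show p - 1 < p by omega)]
  -- structure of c' at and above k
  have h2k : p ^ k * (M - 1) + p ^ k = p ^ k * M := mul_pred_add _ _ hMpos
  have hrepk : c' = p ^ k * (M - 1) + (p ^ k - c0) := by omega
  have hdk : digit p c' k = digit p c k - 1 := by
    rw [hrepk, digit_of_rep hppos k _ _ (by omega), hMdig]
    have hdm := Nat.div_add_mod M p
    have h6 : M - 1 = p * (M / p) + (M % p - 1) := by omega
    rw [h6, Nat.mul_add_mod, Nat.mod_eq_of_lt (show M % p - 1 < p by omega)]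
  have hdivk : c' / p ^ k = M - 1 := by
    rw [hrepk, Nat.mul_add_div (pow_pos hppos k), Nat.div_eq_of_lt (show p ^ k - c0 < p ^ k by omega), add_zero]
  have hMd1 : (M - 1) / p = M / p := by
    have hdm := Nat.div_add_mod M p
    rw [show M - 1 = p * (M / p) + (M % p - 1) by omega,
      Nat.mul_add_div hppos, Nat.div_eq_of_lt (show M % p - 1 < p by omega), add_zero]
  have hdhigh : ∀ i, k < i → digit p c' i = digit p c i := by
    intro i hki
    have e1 : c' / p ^ i = (M - 1) / p ^ (i - k) := by
      rw [show p ^ i = p ^ k * p ^ (i - k) by rw [← pow_add, show k + (i - k) = i by omega],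
        ← Nat.div_div_eq_div_mul, hdivk]
    have e2 : (M - 1) / p ^ (i - k) = M / p ^ (i - k) := by
      rw [show p ^ (i - k) = p * p ^ (i - k - 1) by
            rw [← pow_succ', show (i - k - 1) + 1 = i - k by omega],
        ← Nat.div_div_eq_div_mul, ← Nat.div_div_eq_div_mul, hMd1]
    have e3 : M / p ^ (i - k) = c / p ^ i := by
      rw [hMd, Nat.div_div_eq_div_mul, ← pow_add, show k + (i - k) = i by omega]
    show c' / p ^ i % p = c / p ^ i % p
    rw [e1, e2, e3]
  -- range k ⊆ I
  have hrange : ∀ i, i < k → i ∈ I := by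
    intro i
    induction i with
    | zero => exact fun _ => h0I
    | succ n ih =>
      intro h
      by_contra hni
      exact hI.2 (n + 1) hni (by omega) (by simpa using ih (by omega))
        (hdmid (n + 1) (by omega) h)
  have hsub : Finset.range k ⊆ I := by
    intro i hi; exact hrange i (Finset.mem_range.1 hi)
  set J := I \ Finset.range k with hJd
  have hIeq : Finset.range k ∪ J = I := Finset.union_sdiff_of_subset hsub
  have hdisj : Disjoint (Finset.range k) J := Finset.disjoint_sdiff
  have hJge : ∀ i ∈ J, k ≤ i := by
    intro i hi
    have := (Finset.mem_sdiff.1 hi).2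
    simpa using this
  have hdigcklt : digit p c k < p := Nat.mod_lt _ hppos
  have hdigckpos : 1 ≤ digit p c k := Nat.one_le_iff_ne_zero.2 hk2
  -- Sum 1
  have hsum1 : ∑ i ∈ I, (p - 1 - digit p c' i) * p ^ i =
      (c0 - 1) + ((∑ i ∈ J, (p - 1 - digit p c i) * p ^ i) +
        (if k ∈ J then p ^ k else 0)) := by
    rw [← hIeq, Finset.sum_union hdisj]
    congr 1
    · have hA := Finset.sum_eq_single_of_mem (s := Finset.range k)
        (f := fun i => (p - 1 - digit p c' i) * p ^ i) 0 (Finset.mem_range.2 (by omega))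
        (fun b hb hb0 => by
          show (p - 1 - digit p c' b) * p ^ b = 0
          rw [hdmid b (by omega) (Finset.mem_range.1 hb)]
          simp)
      rw [hA]
      show (p - 1 - digit p c' 0) * p ^ 0 = c0 - 1
      rw [hd0, pow_zero, mul_one]
      omega
    · have hcongr : ∀ i ∈ J, (p - 1 - digit p c' i) * p ^ i
          = (p - 1 - digit p c i) * p ^ i + (if i = k then p ^ k else 0) := by
        intro i hi
        rcases eq_or_lt_of_le (hJge i hi) with hik | hik
        · subst hik
          rw [if_pos rfl, hdk]
          have h7 : p - 1 - (digit p c k - 1) = (p - 1 - digit p c k) + 1 := by omega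
          rw [h7, add_mul, one_mul]
        · rw [hdhigh i hik, if_neg (by omega), add_zero]
      rw [Finset.sum_congr rfl hcongr, Finset.sum_add_distrib,
        Finset.sum_ite_eq' J k (fun _ => p ^ k)]
  -- Sum 2: the starts
  have hfilt : I.filter (fun i => i = 0 ∨ i - 1 ∉ I) =
      insert 0 ((J.filter (fun i => i = 0 ∨ i - 1 ∉ J)).erase k) := by
    ext i
    simp only [Finset.mem_filter, Finset.mem_insert, Finset.mem_erase]
    constructor
    · rintro ⟨hiI, h0 | hpred⟩
      · exact Or.inl h0
      · rcases Nat.eq_zero_or_pos i with h0 | hipos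
        · exact Or.inl h0
        · have hik : k < i := by
            by_contra hle
            exact hpred (hrange (i - 1) (by omega))
          refine Or.inr ⟨by omega, ⟨Finset.mem_sdiff.2 ⟨hiI, by simp; omega⟩, ?_⟩⟩
          right
          intro hmem
          exact hpred (Finset.mem_sdiff.1 hmem).1
    · rintro (h0 | ⟨hik, ⟨hiJ, hcond⟩⟩)
      · subst h0; exact ⟨h0I, Or.inl rfl⟩
      · have hiI : i ∈ I := (Finset.mem_sdiff.1 hiJ).1
        have hige : k ≤ i := hJge i hiJ
        have higt : k < i := by omega
        refine ⟨hiI, Or.inr ?_⟩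
        rcases hcond with h0 | hpred
        · omega
        · intro hmem
          exact hpred (Finset.mem_sdiff.2 ⟨hmem, by simp; omega⟩)
  have hkJfilt : k ∈ J.filter (fun i => i = 0 ∨ i - 1 ∉ J) ↔ k ∈ J := by
    constructor
    · exact fun h => (Finset.mem_filter.1 h).1
    · intro h
      refine Finset.mem_filter.2 ⟨h, Or.inr ?_⟩
      intro hmem
      have := hJge _ hmem
      omega
  have h0notin : (0 : ℕ) ∉ (J.filter (fun i => i = 0 ∨ i - 1 ∉ J)).erase k := by
    intro h
    have := Finset.mem_of_mem_erase h
    have := hJge 0 (Finset.mem_filter.1 this).1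
    omega
  have hsum2 : ∑ i ∈ I.filter (fun i => i = 0 ∨ i - 1 ∉ I), p ^ i +
      (if k ∈ J then p ^ k else 0) =
      1 + ∑ i ∈ J.filter (fun i => i = 0 ∨ i - 1 ∉ J), p ^ i := by
    rw [hfilt, Finset.sum_insert h0notin, pow_zero]
    by_cases hkJ : k ∈ J
    · rw [if_pos hkJ]
      have hk' : k ∈ J.filter (fun i => i = 0 ∨ i - 1 ∉ J) := hkJfilt.2 hkJ
      have h8 : p ^ k + ∑ x ∈ (J.filter (fun i => i = 0 ∨ i - 1 ∉ J)).erase k, p ^ x =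
          ∑ x ∈ J.filter (fun i => i = 0 ∨ i - 1 ∉ J), p ^ x :=
        Finset.add_sum_erase _ (fun i => p ^ i) hk'
      omega
    · rw [if_neg hkJ]
      have : (J.filter (fun i => i = 0 ∨ i - 1 ∉ J)).erase k =
          J.filter (fun i => i = 0 ∨ i - 1 ∉ J) := by
        apply Finset.erase_eq_of_notMem
        intro h; exact hkJ (hkJfilt.1 h)
      rw [this]; omega
  -- assemble
  show deltaC p c' I = deltaC p c J + c0
  rw [deltaC, deltaC]
  omega
end

section
/- Let p be an odd prime and c a positive integer whose digit c_0 = c \bmod p is nonzero and which has some nonzero digit c_j with j \ge 1; set k = \min\{j \ge 1 : c_j \ne 0\} and c' = c - 2c_0. Then for every natural number b, the map I \mapsto I \setminus \{0, \dots, k-1\} restricts to a bijection from \{I \text{ finite, } c'\text{-admissible}, 0 \in I, \delta_{c'}(I) \le b + c_0\} onto \{J \text{ finite, } c\text{-admissible}, 0 \notin J, \delta_c(J) \le b\}. -/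
private lemma digit_lt {p : ℕ} (hp : 0 < p) (c i : ℕ) : digit p c i < p :=
  Nat.mod_lt _ hp

private lemma mod_pow_eq_digit0 (p c : ℕ) :
    ∀ k, 1 ≤ k → (∀ j, 1 ≤ j → j < k → digit p c j = 0) → c % p ^ k = digit p c 0 := by
  intro k
  induction k with
  | zero => omega
  | succ k ih =>
    intro _ h
    rcases Nat.eq_zero_or_pos k with rfl | hk
    · simp [digit, Nat.pow_one]
    · rw [Nat.mod_pow_succ]
      have hd : c / p ^ k % p = 0 := h k hk (Nat.lt_succ_self k)
      rw [hd, Nat.mul_zero, Nat.add_zero]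
      exact ih hk (fun j hj hjk => h j hj (hjk.trans (Nat.lt_succ_self k)))

private lemma digits_of_sub (p c k : ℕ) (hp : 2 ≤ p) (hc0 : digit p c 0 ≠ 0)
    (hk1 : 1 ≤ k) (hk2 : digit p c k ≠ 0)
    (hkmin : ∀ j, 1 ≤ j → j < k → digit p c j = 0) :
    2 * digit p c 0 ≤ c ∧
    digit p (c - 2 * digit p c 0) 0 = p - digit p c 0 ∧
    (∀ i, 1 ≤ i → i < k → digit p (c - 2 * digit p c 0) i = p - 1) ∧
    digit p (c - 2 * digit p c 0) k = digit p c k - 1 ∧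
    (∀ i, k < i → digit p (c - 2 * digit p c 0) i = digit p c i) := by
  have hp0 : 0 < p := by omega
  have hc0lt : digit p c 0 < p := digit_lt hp0 c 0
  have hc01 : 1 ≤ digit p c 0 := Nat.pos_of_ne_zero hc0
  obtain ⟨N, hceq, hNmod⟩ : ∃ N, c = p ^ k * N + digit p c 0 ∧ N % p = digit p c k := by
    refine ⟨c / p ^ k, ?_, rfl⟩
    have h1 := Nat.div_add_mod c (p ^ k)
    have h2 : c % p ^ k = digit p c 0 := mod_pow_eq_digit0 p c k hk1 hkmin
    omega
  have hN1 : 1 ≤ N := by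
    rcases Nat.eq_zero_or_pos N with h0 | h
    · exfalso; apply hk2; rw [← hNmod, h0]; simp
    · exact h
  obtain ⟨N', rfl⟩ : ∃ N', N = N' + 1 := ⟨N - 1, by omega⟩
  have hppk : p ≤ p ^ k := by
    calc p = p ^ 1 := (pow_one p).symm
    _ ≤ p ^ k := Nat.pow_le_pow_right (by omega) hk1
  have hceq' : c = p ^ k * N' + p ^ k + digit p c 0 := by
    conv_lhs => rw [hceq]
    ring
  have h2c : 2 * digit p c 0 ≤ c := by omega
  have hc' : c - 2 * digit p c 0 = p ^ k * N' + (p ^ k - digit p c 0) := by omega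
  have hRlt : p ^ k - digit p c 0 < p ^ k := by omega
  have hckN : digit p c k < p := digit_lt hp0 c k
  have hck1 : 1 ≤ digit p c k := Nat.pos_of_ne_zero hk2
  refine ⟨h2c, ?_, ?_, ?_, ?_⟩
  · -- digit 0 = p - c₀
    show (c - 2 * digit p c 0) / p ^ 0 % p = p - digit p c 0
    rw [pow_zero, Nat.div_one, hc']
    obtain ⟨k', rfl⟩ : ∃ k', k = k' + 1 := ⟨k - 1, by omega⟩
    obtain ⟨Q, hQ⟩ : ∃ Q, p ^ k' = Q + 1 := ⟨p ^ k' - 1, by have := Nat.one_le_pow k' p hp0; omega⟩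
    have e1 : p ^ (k' + 1) = p * Q + p := by rw [pow_succ', hQ, Nat.mul_succ]
    have e2 : p ^ (k' + 1) * N' = p * (p ^ k' * N') := by rw [pow_succ']; ring
    have e3 : p * (p ^ k' * N' + Q) = p * (p ^ k' * N') + p * Q := by rw [Nat.mul_add]
    have key : p ^ (k' + 1) * N' + (p ^ (k' + 1) - digit p c 0)
        = p * (p ^ k' * N' + Q) + (p - digit p c 0) := by omega
    rw [key, Nat.mul_add_mod, Nat.mod_eq_of_lt (by omega)]
  · -- digits 1..k-1 are p-1
    intro i hi1 hik
    show (c - 2 * digit p c 0) / p ^ i % p = p - 1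
    rw [hc']
    obtain ⟨m, hm⟩ : ∃ m, k - i = m + 1 := ⟨k - i - 1, by omega⟩
    have hpik : p ^ i * p ^ (m + 1) = p ^ k := by rw [← pow_add]; congr 1; omega
    have hpi1 : 1 ≤ p ^ i := Nat.one_le_pow _ _ hp0
    have hppi : p ≤ p ^ i := by
      calc p = p ^ 1 := (pow_one p).symm
      _ ≤ p ^ i := Nat.pow_le_pow_right (by omega) hi1
    obtain ⟨S, hS⟩ : ∃ S, p ^ (m + 1) = S + 1 :=
      ⟨p ^ (m + 1) - 1, by have := Nat.one_le_pow (m + 1) p hp0; omega⟩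
    have e1 : p ^ k = p ^ i * S + p ^ i := by rw [← hpik, hS, Nat.mul_succ]
    have e2 : p ^ k * N' = p ^ i * (p ^ (m + 1) * N') := by rw [← hpik]; ring
    have e3 : p ^ i * (p ^ (m + 1) * N' + S) = p ^ i * (p ^ (m + 1) * N') + p ^ i * S := by
      rw [Nat.mul_add]
    have key : p ^ k * N' + (p ^ k - digit p c 0)
        = p ^ i * (p ^ (m + 1) * N' + S) + (p ^ i - digit p c 0) := by omega
    rw [key, Nat.mul_add_div (by omega), Nat.div_eq_of_lt (by omega), Nat.add_zero]
    -- (p^(m+1) * N' + S) % p = p - 1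
    obtain ⟨T, hT⟩ : ∃ T, p ^ m = T + 1 := ⟨p ^ m - 1, by have := Nat.one_le_pow m p hp0; omega⟩
    have f1 : p ^ (m + 1) = p * T + p := by rw [pow_succ', hT, Nat.mul_succ]
    have f2 : p ^ (m + 1) * N' = p * (p ^ m * N') := by rw [pow_succ']; ring
    have f3 : p * (p ^ m * N' + T) = p * (p ^ m * N') + p * T := by rw [Nat.mul_add]
    have key2 : p ^ (m + 1) * N' + S = p * (p ^ m * N' + T) + (p - 1) := by omega
    rw [key2, Nat.mul_add_mod, Nat.mod_eq_of_lt (by omega)]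
  · -- digit k = c_k - 1
    show (c - 2 * digit p c 0) / p ^ k % p = digit p c k - 1
    rw [hc', Nat.mul_add_div (Nat.one_le_pow _ _ hp0), Nat.div_eq_of_lt hRlt, Nat.add_zero]
    have h1 := Nat.div_add_mod (N' + 1) p
    have h2 : N' = p * ((N' + 1) / p) + ((N' + 1) % p - 1) := by
      have : 1 ≤ (N' + 1) % p := by rw [hNmod]; omega
      omega
    rw [h2, Nat.mul_add_mod, Nat.mod_eq_of_lt (by omega), hNmod]
  · -- digits > k unchanged
    intro i hik
    have hpik : p ^ k * p ^ (i - k) = p ^ i := by rw [← pow_add]; congr 1; omega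
    have hpk1 : 1 ≤ p ^ k := Nat.one_le_pow _ _ hp0
    have hpm1 : 1 ≤ p ^ (i - k) := Nat.one_le_pow _ _ hp0
    obtain ⟨q, r, hqr, hr1, hrlt⟩ :
        ∃ q r, N' + 1 = p ^ (i - k) * q + r ∧ 1 ≤ r ∧ r < p ^ (i - k) := by
      refine ⟨(N' + 1) / p ^ (i - k), (N' + 1) % p ^ (i - k),
        (Nat.div_add_mod _ _).symm, ?_, Nat.mod_lt _ (by omega)⟩
      rcases Nat.eq_zero_or_pos ((N' + 1) % p ^ (i - k)) with h0 | h
      · exfalso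
        have hdvd : p ^ (i - k) ∣ N' + 1 := Nat.dvd_of_mod_eq_zero h0
        have hpdvd : p ∣ N' + 1 := dvd_trans (dvd_pow_self p (by omega : i - k ≠ 0)) hdvd
        have h3 : (N' + 1) % p = 0 := Nat.eq_zero_of_dvd_of_lt hpdvd |> fun _ =>
          Nat.mod_eq_zero_of_dvd hpdvd
        rw [hNmod] at h3; exact hk2 h3
      · exact h
    have hN'eq : N' = p ^ (i - k) * q + (r - 1) := by omega
    have hNdiv1 : N' / p ^ (i - k) = q := by
      rw [hN'eq, Nat.mul_add_div (by omega),
        Nat.div_eq_of_lt (show r - 1 < p ^ (i - k) by omega), Nat.add_zero]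
    have hNdiv2 : (N' + 1) / p ^ (i - k) = q := by
      rw [hqr, Nat.mul_add_div (by omega),
        Nat.div_eq_of_lt (show r < p ^ (i - k) by omega), Nat.add_zero]
    have hcdiv : c / p ^ i = q := by
      rw [hceq, ← hpik, ← Nat.div_div_eq_div_mul, Nat.mul_add_div (by omega),
        Nat.div_eq_of_lt (show digit p c 0 < p ^ k by omega), Nat.add_zero, hNdiv2]
    have hc'div : (c - 2 * digit p c 0) / p ^ i = q := by
      rw [hc', ← hpik, ← Nat.div_div_eq_div_mul, Nat.mul_add_div (by omega),
        Nat.div_eq_of_lt hRlt, Nat.add_zero, hNdiv1]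
    show (c - 2 * digit p c 0) / p ^ i % p = c / p ^ i % p
    rw [hc'div, hcdiv]

private lemma range_subset_of_adm (p c' k : ℕ)
    (hd1 : ∀ i, 1 ≤ i → i < k → digit p c' i = p - 1)
    (I : Finset ℕ) (hI : IsAdmissible p c' I) (h0 : 0 ∈ I) :
    Finset.range k ⊆ I := by
  have key : ∀ i, i < k → i ∈ I := by
    intro i
    induction i using Nat.strong_induction_on with
    | _ i ih =>
      intro hik
      rcases Nat.eq_zero_or_pos i with rfl | hi1
      · exact h0
      · by_contra hiI
        have hprev : i - 1 ∈ I := ih (i - 1) (by omega) (by omega)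
        exact hI.2 i hiI hi1 hprev (hd1 i hi1 hik)
  intro i hi
  exact key i (Finset.mem_range.mp hi)

private lemma ge_k_of_adm (p c k : ℕ) (hk1 : 1 ≤ k)
    (hkmin : ∀ j, 1 ≤ j → j < k → digit p c j = 0)
    (J : Finset ℕ) (hJ : IsAdmissible p c J) (h0 : 0 ∉ J) :
    ∀ i ∈ J, k ≤ i := by
  intro i
  induction i using Nat.strong_induction_on with
  | _ i ih =>
    intro hiJ
    by_contra hik
    have hi1 : 1 ≤ i := by
      rcases Nat.eq_zero_or_pos i with rfl | h; exact absurd hiJ h0; exact h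
    have hprev : i - 1 ∉ J := by
      intro h
      exact absurd (ih (i - 1) (by omega) h) (by omega)
    exact hJ.1 i hiJ (Or.inr hprev) (hkmin i hi1 (by omega))

private lemma adm_union_iff (p c c' k : ℕ) (hp : 2 ≤ p)
    (hd0 : digit p c' 0 ≠ 0)
    (hdk : digit p c' k = digit p c k - 1)
    (hgt : ∀ i, k < i → digit p c' i = digit p c i)
    (hk1 : 1 ≤ k) (hck : digit p c k ≠ 0) (hckN : digit p c k < p)
    (J : Finset ℕ) (hJ : ∀ i ∈ J, k ≤ i) :
    IsAdmissible p c' (J ∪ Finset.range k) ↔ IsAdmissible p c J := by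
  constructor
  · rintro ⟨ha, hb⟩
    constructor
    · intro i hiJ hcond
      have hik : k ≤ i := hJ i hiJ
      rcases eq_or_lt_of_le hik with rfl | hlt
      · exact hck
      · rw [← hgt i hlt]
        refine ha i (Finset.mem_union_left _ hiJ) (Or.inr ?_)
        intro hmem
        rcases Finset.mem_union.mp hmem with h | h
        · rcases hcond with h0 | hn
          · omega
          · exact hn h
        · rw [Finset.mem_range] at h; omega
    · intro i hiJ h1 hprev
      have hik : k ≤ i - 1 := hJ _ hprev
      have hlt : k < i := by omega
      rw [← hgt i hlt]
      refine hb i ?_ h1 (Finset.mem_union_left _ hprev)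
      intro hmem
      rcases Finset.mem_union.mp hmem with h | h
      · exact hiJ h
      · rw [Finset.mem_range] at h; omega
  · rintro ⟨ha, hb⟩
    constructor
    · intro i hiI hcond
      rcases Finset.mem_union.mp hiI with hiJ | hir
      · have hik : k ≤ i := hJ i hiJ
        rcases eq_or_lt_of_le hik with rfl | hlt
        · exfalso
          rcases hcond with h0 | hnm
          · omega
          · exact hnm (Finset.mem_union_right _ (Finset.mem_range.mpr (by omega)))
        · rw [hgt i hlt]
          refine ha i hiJ (Or.inr ?_)
          intro hmem
          rcases hcond with h0 | hnm
          · omega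
          · exact hnm (Finset.mem_union_left _ hmem)
      · rw [Finset.mem_range] at hir
        rcases Nat.eq_zero_or_pos i with rfl | hi1
        · exact hd0
        · exfalso
          rcases hcond with h0 | hnm
          · omega
          · exact hnm (Finset.mem_union_right _ (Finset.mem_range.mpr (by omega)))
    · intro i hiI h1 hprev
      have hiJ : i ∉ J := fun h => hiI (Finset.mem_union_left _ h)
      have hirange : ¬ i < k := fun h => hiI (Finset.mem_union_right _ (Finset.mem_range.mpr h))
      rcases eq_or_lt_of_le (show k ≤ i by omega) with rfl | hlt
      · rw [hdk]; omega
      · rw [hgt i hlt]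
        refine hb i hiJ h1 ?_
        rcases Finset.mem_union.mp hprev with h | h
        · exact h
        · rw [Finset.mem_range] at h; omega

private lemma delta_union (p c c' k : ℕ) (hp : 2 ≤ p)
    (hd0 : digit p c' 0 = p - digit p c 0)
    (hc01 : 1 ≤ digit p c 0) (hc0lt : digit p c 0 < p)
    (hd1 : ∀ i, 1 ≤ i → i < k → digit p c' i = p - 1)
    (hdk : digit p c' k = digit p c k - 1)
    (hck1 : 1 ≤ digit p c k) (hckN : digit p c k < p)
    (hgt : ∀ i, k < i → digit p c' i = digit p c i)
    (hk1 : 1 ≤ k)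
    (J : Finset ℕ) (hJ : ∀ i ∈ J, k ≤ i) :
    deltaC p c' (J ∪ Finset.range k) = deltaC p c J + digit p c 0 := by
  have hdisj : Disjoint J (Finset.range k) := by
    rw [Finset.disjoint_left]
    intro i hi hir
    rw [Finset.mem_range] at hir
    exact absurd (hJ i hi) (by omega)
  unfold deltaC
  rw [Finset.sum_union hdisj]
  have hr : ∑ i ∈ Finset.range k, (p - 1 - digit p c' i) * p ^ i = digit p c 0 - 1 := by
    rw [Finset.sum_eq_single 0]
    · rw [hd0, pow_zero, mul_one]; omega
    · intro i hir hi0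
      rw [Finset.mem_range] at hir
      rw [hd1 i (by omega) hir]
      simp
    · intro h
      exact absurd (Finset.mem_range.mpr (by omega : (0:ℕ) < k)) h
  have hsJ : ∑ i ∈ J, (p - 1 - digit p c' i) * p ^ i
      = (∑ i ∈ J, (p - 1 - digit p c i) * p ^ i) + (if k ∈ J then p ^ k else 0) := by
    have hcong : ∀ i ∈ J, (p - 1 - digit p c' i) * p ^ i
        = (p - 1 - digit p c i) * p ^ i + (if i = k then p ^ i else 0) := by
      intro i hi
      have hik := hJ i hi
      rcases eq_or_lt_of_le hik with rfl | hlt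
      · rw [hdk, if_pos rfl]
        have h2 : p - 1 - (digit p c k - 1) = (p - 1 - digit p c k) + 1 := by omega
        rw [h2, Nat.add_mul, one_mul]
      · rw [hgt i hlt, if_neg (by omega)]
        simp
    rw [Finset.sum_congr rfl hcong, Finset.sum_add_distrib,
      Finset.sum_ite_eq' J k (fun i => p ^ i)]
  have hfilter : (J ∪ Finset.range k).filter (fun i => i = 0 ∨ i - 1 ∉ (J ∪ Finset.range k))
      = insert 0 ((J.filter (fun i => i = 0 ∨ i - 1 ∉ J)).erase k) := by
    ext i
    simp only [Finset.mem_filter, Finset.mem_union, Finset.mem_range, Finset.mem_insert,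
      Finset.mem_erase, not_or]
    constructor
    · rintro ⟨hmem, hcond⟩
      rcases hcond with rfl | ⟨hnJ, hnr⟩
      · left; rfl
      · right
        have hik : k ≤ i - 1 := by omega
        have hiJ : i ∈ J := by
          rcases hmem with h | h
          · exact h
          · omega
        exact ⟨by omega, hiJ, Or.inr hnJ⟩
    · rintro (rfl | ⟨hne, hiJ, hcond⟩)
      · exact ⟨Or.inr (by omega), Or.inl rfl⟩
      · have hik : k ≤ i := hJ i hiJ
        have hik' : k < i := by omega
        refine ⟨Or.inl hiJ, Or.inr ⟨?_, by omega⟩⟩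
        rcases hcond with h0 | h
        · omega
        · exact h
  have h0ne : (0:ℕ) ∉ (J.filter (fun i => i = 0 ∨ i - 1 ∉ J)).erase k := by
    intro h
    have := Finset.mem_of_mem_erase h
    have h2 := (Finset.mem_filter.mp this).1
    exact absurd (hJ 0 h2) (by omega)
  rw [hfilter, Finset.sum_insert h0ne, pow_zero]
  have hsplit : ∑ i ∈ J.filter (fun i => i = 0 ∨ i - 1 ∉ J), p ^ i
      = (if k ∈ J then p ^ k else 0)
        + ∑ i ∈ (J.filter (fun i => i = 0 ∨ i - 1 ∉ J)).erase k, p ^ i := by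
    by_cases hkJ : k ∈ J
    · have hkf : k ∈ J.filter (fun i => i = 0 ∨ i - 1 ∉ J) := by
        refine Finset.mem_filter.mpr ⟨hkJ, Or.inr ?_⟩
        intro h
        exact absurd (hJ _ h) (by omega)
      rw [if_pos hkJ, ← Finset.sum_erase_add _ _ hkf]
      ring
    · have : k ∉ J.filter (fun i => i = 0 ∨ i - 1 ∉ J) := fun h =>
        hkJ (Finset.mem_filter.mp h).1
      rw [if_neg hkJ, Finset.erase_eq_of_notMem this, zero_add]
  rw [hr, hsJ]
  omega

/-- Let `p` be an odd prime and `c` a positive integer with `c₀ = c mod p ≠ 0` having a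
nonzero digit `c_j`, `j ≥ 1`; let `k` be minimal such `j` and `c' = c - 2c₀`. Then for
every `b : ℕ`, the map `I ↦ I \ {0,…,k-1}` restricts to a bijection from
`{I finite, c'-admissible, 0 ∈ I, δ_{c'}(I) ≤ b + c₀}` onto
`{J finite, c-admissible, 0 ∉ J, δ_c(J) ≤ b}`. -/
theorem admissible_bounded_bijection (p : ℕ) (hp : p.Prime) (hodd : Odd p)
    (c : ℕ) (hc : 0 < c) (hc0 : digit p c 0 ≠ 0)
    (k : ℕ) (hk1 : 1 ≤ k) (hk2 : digit p c k ≠ 0)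
    (hkmin : ∀ j, 1 ≤ j → j < k → digit p c j = 0) :
    ∀ b : ℕ,
      Set.BijOn (fun I : Finset ℕ => I \ Finset.range k)
        {I : Finset ℕ | IsAdmissible p (c - 2 * digit p c 0) I ∧ 0 ∈ I ∧
          deltaC p (c - 2 * digit p c 0) I ≤ b + digit p c 0}
        {J : Finset ℕ | IsAdmissible p c J ∧ 0 ∉ J ∧ deltaC p c J ≤ b} := by
  intro b
  have hp2 : 2 ≤ p := hp.two_le
  have hp0 : 0 < p := by omega
  obtain ⟨h2c, hd0, hd1, hdk, hgt⟩ := digits_of_sub p c k hp2 hc0 hk1 hk2 hkmin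
  have hc01 : 1 ≤ digit p c 0 := Nat.pos_of_ne_zero hc0
  have hc0lt : digit p c 0 < p := digit_lt hp0 c 0
  have hck1 : 1 ≤ digit p c k := Nat.pos_of_ne_zero hk2
  have hckN : digit p c k < p := digit_lt hp0 c k
  set c' := c - 2 * digit p c 0 with hc'def
  have hd0' : digit p c' 0 ≠ 0 := by rw [hd0]; omega
  have domdec : ∀ I : Finset ℕ, IsAdmissible p c' I → 0 ∈ I →
      I = (I \ Finset.range k) ∪ Finset.range k ∧ (∀ i ∈ I \ Finset.range k, k ≤ i) := by
    intro I hI h0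
    have hsub := range_subset_of_adm p c' k hd1 I hI h0
    refine ⟨(Finset.sdiff_union_of_subset hsub).symm, ?_⟩
    intro i hi
    rw [Finset.mem_sdiff, Finset.mem_range] at hi
    omega
  refine ⟨?_, ?_, ?_⟩
  · -- MapsTo
    rintro I ⟨hadm, h0, hdel⟩
    show IsAdmissible p c (I \ Finset.range k) ∧ 0 ∉ I \ Finset.range k ∧
      deltaC p c (I \ Finset.range k) ≤ b
    obtain ⟨hIeq, hJk⟩ := domdec I hadm h0
    have hadm' : IsAdmissible p c' ((I \ Finset.range k) ∪ Finset.range k) := by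
      rw [← hIeq]; exact hadm
    have hdelta := delta_union p c c' k hp2 hd0 hc01 hc0lt hd1 hdk hck1 hckN hgt hk1
      (I \ Finset.range k) hJk
    rw [← hIeq] at hdelta
    refine ⟨(adm_union_iff p c c' k hp2 hd0' hdk hgt hk1 hk2 hckN _ hJk).mp hadm', ?_, ?_⟩
    · intro h; exact absurd (hJk 0 h) (by omega)
    · omega
  · -- InjOn
    rintro I₁ ⟨ha1, h01, _⟩ I₂ ⟨ha2, h02, _⟩ heq
    obtain ⟨he1, _⟩ := domdec I₁ ha1 h01
    obtain ⟨he2, _⟩ := domdec I₂ ha2 h02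
    rw [he1, he2]
    simp only at heq
    rw [heq]
  · -- SurjOn
    rintro J ⟨hadm, h0J, hdel⟩
    have hJk : ∀ i ∈ J, k ≤ i := ge_k_of_adm p c k hk1 hkmin J hadm h0J
    refine ⟨J ∪ Finset.range k, ⟨?_, ?_, ?_⟩, ?_⟩
    · exact (adm_union_iff p c c' k hp2 hd0' hdk hgt hk1 hk2 hckN J hJk).mpr hadm
    · exact Finset.mem_union_right _ (Finset.mem_range.mpr (by omega))
    · rw [delta_union p c c' k hp2 hd0 hc01 hc0lt hd1 hdk hck1 hckN hgt hk1 J hJk]; omega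
    · show (J ∪ Finset.range k) \ Finset.range k = J
      ext i
      simp only [Finset.mem_sdiff, Finset.mem_union, Finset.mem_range]
      constructor
      · rintro ⟨h | h, hn⟩
        · exact h
        · omega
      · intro h
        exact ⟨Or.inl h, fun hr => absurd (hJk i h) (by omega)⟩
end
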